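/- Let W = {(W_i, ω_i)}_{i∈I} be a Bessel fusion sequence in H with W_i ⊆ S_W(R(K)) for all i ∈ I, where K ∈ B(H) has closed range and S_W restricted to R(K) is invertible onto S_W(R(K)). Then the family W̃ = {(K* S_W^{-1} π_{S_W(R(K))} W_i, ω_i)}_{i∈I} is a Bessel fusion sequence and satisfies Kf = Σ_{i∈I} ω_i² π_{R(K)} π_{W_i} (S_W^{-1})* K π_{W̃_i} f for all f ∈ H; that is, W̃ is a K-dual of W. -/

import Mathlib

open scoped InnerProductSpace
open ContinuousLinearMap (adjoint)

noncomputable def proj {H : Type*} [NormedAddCommGroup H] [InnerProductSpace ℂ H]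
    (U : Submodule ℂ H) [U.HasOrthogonalProjection] : H →L[ℂ] H :=
  U.subtypeL.comp (U.orthogonalProjectionOnto)

variable {H : Type*} [NormedAddCommGroup H] [InnerProductSpace ℂ H] [CompleteSpace H]
  [TopologicalSpace.SeparableSpace H]

section helpers

variable {U : Submodule ℂ H} [U.HasOrthogonalProjection]

lemma proj_mem (x : H) : proj U x ∈ U := (U.orthogonalProjectionOnto x).2

lemma proj_eq_self {x : H} (hx : x ∈ U) : proj U x = x := by
  have := Submodule.orthogonalProjectionOnto_mem_subspace_eq_self (K := U) ⟨x, hx⟩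
  simp only [proj, ContinuousLinearMap.comp_apply, this]
  rfl

lemma proj_eq_zero {x : H} (hx : x ∈ Uᗮ) : proj U x = 0 := by
  simp [proj, Submodule.orthogonalProjectionOnto_apply_of_mem_orthogonal hx]

lemma sub_proj_mem_orthogonal (x : H) : x - proj U x ∈ Uᗮ :=
  U.sub_starProjection_mem_orthogonal x

lemma inner_proj_left_eq_right (x y : H) : ⟪proj U x, y⟫_ℂ = ⟪x, proj U y⟫_ℂ :=
  U.inner_starProjection_left_eq_right x y

lemma inner_self_proj (x : H) : ⟪x, proj U x⟫_ℂ = (‖proj U x‖ ^ 2 : ℝ) := by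
  have h1 : ⟪proj U x, proj U x⟫_ℂ = ⟪x, proj U (proj U x)⟫_ℂ :=
    inner_proj_left_eq_right x (proj U x)
  rw [proj_eq_self (proj_mem x)] at h1
  rw [← h1, inner_self_eq_norm_sq_to_K]
  norm_num

end helpers

set_option maxHeartbeats 1000000 in
theorem canonical_K_dual {ι : Type*} [Countable ι]
    (K S SWinv : H →L[ℂ] H) [CompleteSpace (LinearMap.range (K : H →ₗ[ℂ] H))]
    (W Wt : ι → Submodule ℂ H) [∀ i, CompleteSpace (W i)] [∀ i, CompleteSpace (Wt i)]
    (ω : ι → ℝ) (hω : ∀ i, 0 < ω i) (B : ℝ) (hB : 0 < B)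
    (hBessel : ∀ f : H, ∑' i, ω i ^ 2 * ‖proj (W i) f‖ ^ 2 ≤ B * ‖f‖ ^ 2)
    (hS : ∀ f : H, HasSum (fun i => ω i ^ 2 • proj (W i) f) (S f))
    (SWRK : Submodule ℂ H) [CompleteSpace SWRK]
    (hSWRK : SWRK = (LinearMap.range (K : H →ₗ[ℂ] H)).map (S : H →ₗ[ℂ] H))
    (hsub : ∀ i, W i ≤ SWRK)
    (hinv1 : ∀ x ∈ LinearMap.range (K : H →ₗ[ℂ] H), SWinv (S x) = x)
    (hinv2 : ∀ y ∈ SWRK, S (SWinv y) = y)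
    (hWt : ∀ i, Wt i = ((W i).map ((adjoint K ∘L SWinv ∘L proj SWRK : H →L[ℂ] H) : H →ₗ[ℂ] H)).topologicalClosure) :
    (∃ Bt : ℝ, 0 < Bt ∧ ∀ f : H, ∑' i, ω i ^ 2 * ‖proj (Wt i) f‖ ^ 2 ≤ Bt * ‖f‖ ^ 2) ∧
      ∀ f : H, HasSum (fun i => ω i ^ 2 •
        proj (LinearMap.range (K : H →ₗ[ℂ] H)) (proj (W i) (adjoint SWinv (K (proj (Wt i) f))))) (K f) := by
  classical
  set M : H →L[ℂ] H := adjoint K ∘L SWinv ∘L proj SWRK with hM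
  set N : H →L[ℂ] H := adjoint M with hN
  -- membership facts
  have hSWinv_mem : ∀ v ∈ SWRK, SWinv v ∈ LinearMap.range (K : H →ₗ[ℂ] H) := by
    intro v hv
    rw [hSWRK] at hv
    obtain ⟨x, hx, rfl⟩ := hv
    rw [ContinuousLinearMap.coe_coe, hinv1 x hx]
    exact hx
  -- Step A : adjoint K is bounded below on range K
  obtain ⟨C, hC, hCb⟩ : ∃ C > 0, ∀ u ∈ LinearMap.range (K : H →ₗ[ℂ] H), ‖u‖ ≤ C * ‖adjoint K u‖ := by
    have hsurj : Function.Surjective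
        (K.codRestrict (LinearMap.range (K : H →ₗ[ℂ] H)) (fun x => LinearMap.mem_range_self (K : H →ₗ[ℂ] H) x)) := by
      rintro ⟨y, x, rfl⟩
      exact ⟨x, rfl⟩
    obtain ⟨C, hC, hCb⟩ := ContinuousLinearMap.exists_preimage_norm_le _ hsurj
    refine ⟨C, hC, ?_⟩
    intro u hu
    obtain ⟨x, hx, hxn⟩ := hCb ⟨u, hu⟩
    have hKx : K x = u := congrArg Subtype.val hx
    have h1 : (‖u‖ ^ 2 : ℝ) = ‖⟪x, adjoint K u⟫_ℂ‖ := by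
      rw [ContinuousLinearMap.adjoint_inner_right, hKx, inner_self_eq_norm_sq_to_K]
      norm_num
    have h2 : ‖⟪x, adjoint K u⟫_ℂ‖ ≤ ‖x‖ * ‖adjoint K u‖ := norm_inner_le_norm x _
    have hxn' : ‖x‖ ≤ C * ‖u‖ := by simpa using hxn
    rcases eq_or_lt_of_le (norm_nonneg u) with h0 | h0
    · rw [← h0]; positivity
    · have h3 : ‖u‖ ^ 2 ≤ C * ‖u‖ * ‖adjoint K u‖ := by
        calc (‖u‖ ^ 2 : ℝ) = ‖⟪x, adjoint K u⟫_ℂ‖ := h1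
          _ ≤ ‖x‖ * ‖adjoint K u‖ := h2
          _ ≤ C * ‖u‖ * ‖adjoint K u‖ :=
            mul_le_mul_of_nonneg_right hxn' (norm_nonneg _)
      nlinarith [norm_nonneg (adjoint K u)]
  -- Step B : M is bounded below on SWRK
  set c : ℝ := C * (‖S‖ + 1) with hc_def
  have hc : 0 < c := by positivity
  have hMlow : ∀ v ∈ SWRK, ‖v‖ ≤ c * ‖M v‖ := by
    intro v hv
    have hMv : M v = adjoint K (SWinv v) := by
      simp [hM, ContinuousLinearMap.comp_apply, proj_eq_self hv]
    have h1 : ‖v‖ ≤ ‖S‖ * ‖SWinv v‖ := by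
      conv_lhs => rw [← hinv2 v hv]
      exact S.le_opNorm _
    have h2 : ‖SWinv v‖ ≤ C * ‖adjoint K (SWinv v)‖ := hCb _ (hSWinv_mem v hv)
    rw [hMv]
    calc ‖v‖ ≤ ‖S‖ * ‖SWinv v‖ := h1
      _ ≤ ‖S‖ * (C * ‖adjoint K (SWinv v)‖) :=
        mul_le_mul_of_nonneg_left h2 (norm_nonneg S)
      _ ≤ c * ‖adjoint K (SWinv v)‖ := by
        rw [hc_def]; nlinarith [norm_nonneg (adjoint K (SWinv v)), norm_nonneg S, hC.le]
  -- norm bound for projections onto Wt i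
  have hCnorm : ∀ (i : ι) (f : H), ‖proj (Wt i) f‖ ≤ c * ‖proj (W i) (N f)‖ := by
    intro i f
    set a : ℝ := c * ‖proj (W i) (N f)‖ with ha_def
    have ha0 : 0 ≤ a := by positivity
    have hset : ∀ w ∈ Wt i, ‖⟪f, w⟫_ℂ‖ ≤ a * ‖w‖ := by
      intro w hw
      rw [hWt i] at hw
      have hclosed : IsClosed {w : H | ‖⟪f, w⟫_ℂ‖ ≤ a * ‖w‖} := by
        apply isClosed_le
        · exact (continuous_const.inner continuous_id).norm
        · exact continuous_norm.const_smul a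
      have hsubset : ((W i).map (M : H →ₗ[ℂ] H) : Set H) ⊆ {w : H | ‖⟪f, w⟫_ℂ‖ ≤ a * ‖w‖} := by
        rintro _ ⟨v, hv, rfl⟩
        have h1 : ⟪f, M v⟫_ℂ = ⟪N f, v⟫_ℂ := by
          rw [hN, ContinuousLinearMap.adjoint_inner_left]
        have h2 : ⟪N f, v⟫_ℂ = ⟪proj (W i) (N f), v⟫_ℂ := by
          rw [inner_proj_left_eq_right, proj_eq_self hv]
        have h3 : ‖⟪f, M v⟫_ℂ‖ ≤ ‖proj (W i) (N f)‖ * ‖v‖ := by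
          rw [h1, h2]; exact norm_inner_le_norm _ _
        have h4 : ‖v‖ ≤ c * ‖M v‖ := hMlow v (hsub i hv)
        have h5 : 0 ≤ ‖proj (W i) (N f)‖ := norm_nonneg _
        calc ‖⟪f, M v⟫_ℂ‖ ≤ ‖proj (W i) (N f)‖ * ‖v‖ := h3
          _ ≤ ‖proj (W i) (N f)‖ * (c * ‖M v‖) := mul_le_mul_of_nonneg_left h4 h5
          _ = a * ‖M v‖ := by ring
      have hcl : (((W i).map (M : H →ₗ[ℂ] H)).topologicalClosure : Set H) ⊆
          {w : H | ‖⟪f, w⟫_ℂ‖ ≤ a * ‖w‖} := by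
        rw [Submodule.topologicalClosure_coe]
        exact closure_minimal hsubset hclosed
      exact hcl hw
    have hkey : ‖proj (Wt i) f‖ ^ 2 ≤ a * ‖proj (Wt i) f‖ := by
      have h1 := hset (proj (Wt i) f) (proj_mem f)
      rw [inner_self_proj] at h1
      simpa using h1
    rcases eq_or_lt_of_le (norm_nonneg (proj (Wt i) f)) with h0 | h0
    · rw [← h0]; exact ha0
    · nlinarith
  -- summability of the Bessel terms for W
  have hsummW : ∀ g : H, Summable (fun i => ω i ^ 2 * ‖proj (W i) g‖ ^ 2) := by
    intro g
    have h1 : HasSum (fun i => ⟪g, ω i ^ 2 • proj (W i) g⟫_ℂ) ⟪g, S g⟫_ℂ :=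
      (innerSL ℂ g).hasSum (hS g)
    have h2 : HasSum (fun i => (⟪g, ω i ^ 2 • proj (W i) g⟫_ℂ).re) (⟪g, S g⟫_ℂ).re :=
      h1.map Complex.reAddGroupHom Complex.continuous_re
    have h3 : ∀ i, (⟪g, ω i ^ 2 • proj (W i) g⟫_ℂ).re = ω i ^ 2 * ‖proj (W i) g‖ ^ 2 := by
      intro i
      rw [RCLike.real_smul_eq_coe_smul (K := ℂ), inner_smul_right, inner_self_proj]
      simp [← Complex.ofReal_pow]
    exact ⟨_, h2.congr_fun (fun i => (h3 i).symm)⟩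
  -- self-adjointness of S
  have hSadj : ∀ a b : H, ⟪b, S a⟫_ℂ = ⟪S b, a⟫_ℂ := by
    intro a b
    have h1 : HasSum (fun i => ⟪b, ω i ^ 2 • proj (W i) a⟫_ℂ) ⟪b, S a⟫_ℂ :=
      (innerSL ℂ b).hasSum (hS a)
    have h2 : HasSum (fun i => ⟪a, ω i ^ 2 • proj (W i) b⟫_ℂ) ⟪a, S b⟫_ℂ :=
      (innerSL ℂ a).hasSum (hS b)
    have h3 : HasSum (fun i => (starRingEnd ℂ) ⟪a, ω i ^ 2 • proj (W i) b⟫_ℂ)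
        ((starRingEnd ℂ) ⟪a, S b⟫_ℂ) :=
      h2.map (starRingEnd ℂ) continuous_star
    have h4 : ∀ i, (starRingEnd ℂ) ⟪a, ω i ^ 2 • proj (W i) b⟫_ℂ
        = ⟪b, ω i ^ 2 • proj (W i) a⟫_ℂ := by
      intro i
      rw [inner_conj_symm]
      rw [RCLike.real_smul_eq_coe_smul (K := ℂ) (ω i ^ 2) (proj (W i) b),
        RCLike.real_smul_eq_coe_smul (K := ℂ) (ω i ^ 2) (proj (W i) a),
        inner_smul_left, inner_smul_right, inner_proj_left_eq_right]
      simp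
    have h5 : HasSum (fun i => ⟪b, ω i ^ 2 • proj (W i) a⟫_ℂ)
        ((starRingEnd ℂ) ⟪a, S b⟫_ℂ) := h3.congr_fun (fun i => (h4 i).symm)
    have := h1.unique h5
    rw [this, inner_conj_symm]
  constructor
  · -- Bessel bound for Wt
    refine ⟨c ^ 2 * B * (‖N‖ + 1) ^ 2, by positivity, ?_⟩
    intro f
    have h1 : ∀ i, ω i ^ 2 * ‖proj (Wt i) f‖ ^ 2
        ≤ c ^ 2 * (ω i ^ 2 * ‖proj (W i) (N f)‖ ^ 2) := by
      intro i
      have h := hCnorm i f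
      have h2 : ‖proj (Wt i) f‖ ^ 2 ≤ (c * ‖proj (W i) (N f)‖) ^ 2 :=
        pow_le_pow_left₀ (norm_nonneg _) h 2
      nlinarith [sq_nonneg (ω i)]
    have hsum2 : Summable (fun i => c ^ 2 * (ω i ^ 2 * ‖proj (W i) (N f)‖ ^ 2)) :=
      (hsummW (N f)).mul_left _
    have hsum1 : Summable (fun i => ω i ^ 2 * ‖proj (Wt i) f‖ ^ 2) :=
      Summable.of_nonneg_of_le (fun i => by positivity) h1 hsum2
    have hle := Summable.tsum_le_tsum h1 hsum1 hsum2
    rw [tsum_mul_left] at hle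
    have hB1 : ∑' i, ω i ^ 2 * ‖proj (W i) (N f)‖ ^ 2 ≤ B * ‖N f‖ ^ 2 := hBessel (N f)
    have hNf : ‖N f‖ ≤ (‖N‖ + 1) * ‖f‖ := by
      have := N.le_opNorm f
      nlinarith [norm_nonneg f]
    have hNf2 : ‖N f‖ ^ 2 ≤ (‖N‖ + 1) ^ 2 * ‖f‖ ^ 2 := by
      nlinarith [norm_nonneg (N f), norm_nonneg f, norm_nonneg N]
    calc ∑' i, ω i ^ 2 * ‖proj (Wt i) f‖ ^ 2
        ≤ c ^ 2 * ∑' i, ω i ^ 2 * ‖proj (W i) (N f)‖ ^ 2 := hle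
      _ ≤ c ^ 2 * (B * ‖N f‖ ^ 2) := mul_le_mul_of_nonneg_left hB1 (sq_nonneg c)
      _ = c ^ 2 * B * ‖N f‖ ^ 2 := by ring
      _ ≤ c ^ 2 * B * ((‖N‖ + 1) ^ 2 * ‖f‖ ^ 2) :=
          mul_le_mul_of_nonneg_left hNf2 (by positivity)
      _ = c ^ 2 * B * (‖N‖ + 1) ^ 2 * ‖f‖ ^ 2 := by ring
  · -- reconstruction formula
    intro f
    set g : H := adjoint SWinv (K f) with hg
    have hterm : ∀ i, proj (W i) (adjoint SWinv (K (proj (Wt i) f))) = proj (W i) g := by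
      intro i
      have hd : adjoint SWinv (K (f - proj (Wt i) f)) ∈ (W i)ᗮ := by
        rw [Submodule.mem_orthogonal]
        intro v hv
        have hMv : M v ∈ Wt i := by
          rw [hWt i]
          exact ((W i).map (M : H →ₗ[ℂ] H)).le_topologicalClosure ⟨v, hv, rfl⟩
        have hd0 : f - proj (Wt i) f ∈ (Wt i)ᗮ := sub_proj_mem_orthogonal f
        have hMveq : M v = adjoint K (SWinv v) := by
          simp [hM, ContinuousLinearMap.comp_apply, proj_eq_self (hsub i hv)]
        calc ⟪v, adjoint SWinv (K (f - proj (Wt i) f))⟫_ℂ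
            = ⟪SWinv v, K (f - proj (Wt i) f)⟫_ℂ := by
              rw [ContinuousLinearMap.adjoint_inner_right]
          _ = ⟪adjoint K (SWinv v), f - proj (Wt i) f⟫_ℂ := by
              rw [ContinuousLinearMap.adjoint_inner_left]
          _ = ⟪M v, f - proj (Wt i) f⟫_ℂ := by rw [hMveq]
          _ = 0 := (Submodule.mem_orthogonal _ _).mp hd0 (M v) hMv
      have hz : proj (W i) (adjoint SWinv (K (f - proj (Wt i) f))) = 0 := proj_eq_zero hd
      have hsplit : adjoint SWinv (K f)
          = adjoint SWinv (K (proj (Wt i) f)) + adjoint SWinv (K (f - proj (Wt i) f)) := by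
        have hx : proj (Wt i) f + (f - proj (Wt i) f) = f := by abel
        rw [← map_add, ← map_add, hx]
      rw [hg, hsplit, map_add, hz, add_zero]
    have hsum := (proj (LinearMap.range (K : H →ₗ[ℂ] H))).hasSum (hS g)
    have hKf : proj (LinearMap.range (K : H →ₗ[ℂ] H)) (S g) = K f := by
      have hperp : S g - K f ∈ (LinearMap.range (K : H →ₗ[ℂ] H))ᗮ := by
        rw [Submodule.mem_orthogonal]
        rintro _ ⟨x, rfl⟩
        rw [inner_sub_right]
        have h1 : ⟪K x, S g⟫_ℂ = ⟪S (K x), g⟫_ℂ := hSadj g (K x)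
        have h2 : ⟪S (K x), g⟫_ℂ = ⟪K x, K f⟫_ℂ := by
          rw [hg, ContinuousLinearMap.adjoint_inner_right,
            hinv1 (K x) (LinearMap.mem_range_self (K : H →ₗ[ℂ] H) x)]
        rw [ContinuousLinearMap.coe_coe, h1, h2, sub_self]
      have hz : proj (LinearMap.range (K : H →ₗ[ℂ] H)) (S g - K f) = 0 := proj_eq_zero hperp
      have h2 : proj (LinearMap.range (K : H →ₗ[ℂ] H)) (K f) = K f :=
        proj_eq_self (LinearMap.mem_range_self (K : H →ₗ[ℂ] H) f)
      have h3 : S g = (S g - K f) + K f := by abel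
      rw [h3, map_add, hz, h2, zero_add]
    have hsum' : HasSum (fun i => ω i ^ 2 • proj (LinearMap.range (K : H →ₗ[ℂ] H)) (proj (W i) g)) (K f) := by
      rw [← hKf]
      refine hsum.congr_fun (fun i => ?_)
      rw [RCLike.real_smul_eq_coe_smul (K := ℂ) (ω i ^ 2) (proj (W i) g),
        RCLike.real_smul_eq_coe_smul (K := ℂ) (ω i ^ 2)
          (proj (LinearMap.range (K : H →ₗ[ℂ] H)) (proj (W i) g)), map_smul]
    exact hsum'.congr_fun (fun i => by rw [hterm i])
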